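/- arXiv:2410.09766 — 2 statements merged into one kernel-verified Lean document; each statement's English description precedes it below -/
import Mathlib

section
/- Let Z_1, …, Z_n be independent random variables taking values in a measurable space 𝒵, and let f : 𝒵^n → ℝ be a measurable function such that for every i ∈ [n] and all z_1, …, z_n, z_i' ∈ 𝒵, |f(z_1, …, z_{i−1}, z_i, z_{i+1}, …, z_n) − f(z_1, …, z_{i−1}, z_i', z_{i+1}, …, z_n)| ≤ β. Then for every p > 1, (E|f(Z_1, …, Z_n) − E f(Z_1, …, Z_n)|^p)^{1/p} ≤ √(2pn) · β. -/
open MeasureTheory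

set_option maxHeartbeats 1000000

namespace McD
open Real

variable {Z : Type*} [MeasurableSpace Z] {Ω : Type*} [MeasurableSpace Ω]

lemma nonempty_of_prob (m : Measure Ω) [IsProbabilityMeasure m] : Nonempty Ω := by
  by_contra h
  rw [not_nonempty_iff] at h
  have h1 := measure_univ (μ := m)
  rw [Set.univ_eq_empty_iff.2 h, measure_empty] at h1
  exact zero_ne_one h1

lemma insertNth_update {n : ℕ} (i : Fin (n+1)) (z : Z) (S : Fin n → Z) (j : Fin n) (w : Z) :
    Fin.insertNth (α := fun _ => Z) i z (Function.update S j w)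
      = Function.update (Fin.insertNth i z S) (i.succAbove j) w := by
  ext k
  rcases eq_or_ne k (i.succAbove j) with rfl | hk
  · simp [Fin.insertNth_apply_succAbove]
  · rw [Function.update_of_ne hk]
    rcases eq_or_ne k i with rfl | hki
    · simp
    · obtain ⟨j', rfl⟩ := Fin.exists_succAbove_eq hki
      have hj' : j' ≠ j := fun h => hk (by rw [h])
      simp [Fin.insertNth_apply_succAbove, Function.update_of_ne hj']

lemma integrable_of_bounded (m : Measure Ω) [IsFiniteMeasure m]
    {g : Ω → ℝ} (hg : Measurable g) {C : ℝ} (hC : ∀ ω, |g ω| ≤ C) : Integrable g m :=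
  (integrable_const C).mono' hg.aestronglyMeasurable (ae_of_all _ (fun ω => by simpa using hC ω))

lemma exp_mul_le (t C : ℝ) {x : ℝ} (hx : |x| ≤ C) : Real.exp (t * x) ≤ Real.exp (|t| * C) := by
  apply Real.exp_le_exp.2
  calc t * x ≤ |t * x| := le_abs_self _
    _ = |t| * |x| := abs_mul _ _
    _ ≤ |t| * C := mul_le_mul_of_nonneg_left hx (abs_nonneg t)

lemma mgf_centered (m : Measure Ω) [IsProbabilityMeasure m] {Y : Ω → ℝ} (hY : Measurable Y)
    {β : ℝ} (hb : ∀ ω, |Y ω| ≤ β) (h0 : ∫ ω, Y ω ∂m = 0) (t : ℝ) :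
    ∫ ω, Real.exp (t * Y ω) ∂m ≤ Real.exp (t ^ 2 * β ^ 2 / 2) := by
  obtain ⟨ω₀⟩ := nonempty_of_prob m
  have hβ0 : 0 ≤ β := le_trans (abs_nonneg _) (hb ω₀)
  have hintexp : Integrable (fun ω => Real.exp (t * Y ω)) m := by
    apply integrable_of_bounded m (Real.measurable_exp.comp (measurable_const.mul hY))
      (C := Real.exp (|t| * β))
    intro ω
    simp only [Function.comp_apply]
    rw [abs_of_nonneg (Real.exp_pos _).le]
    exact exp_mul_le t β (hb ω)
  have hintY : Integrable Y m := integrable_of_bounded m hY hb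
  rcases eq_or_lt_of_le hβ0 with hβ | hβ
  · have hY0 : ∀ ω, Y ω = 0 := fun ω => abs_nonpos_iff.1 (hβ ▸ hb ω)
    simp only [hY0, mul_zero, Real.exp_zero, integral_const, measure_univ, probReal_univ,
      smul_eq_mul, one_mul]
    exact Real.one_le_exp (by positivity)
  · have hpt : ∀ ω, Real.exp (t * Y ω)
        ≤ Real.cosh (t * β) + Y ω / β * Real.sinh (t * β) := by
      intro ω
      set y := Y ω with hy
      obtain ⟨hy1, hy2⟩ := abs_le.1 (hb ω)
      have ha : (0:ℝ) ≤ (β - y) / (2 * β) := by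
        apply div_nonneg (by linarith) (by linarith)
      have hb' : (0:ℝ) ≤ (β + y) / (2 * β) := by
        apply div_nonneg (by linarith) (by linarith)
      have hab : (β - y) / (2 * β) + (β + y) / (2 * β) = 1 := by
        field_simp
        ring
      have hkey := convexOn_exp.2 (Set.mem_univ (t * (-β))) (Set.mem_univ (t * β)) ha hb' hab
      simp only [smul_eq_mul] at hkey
      have harg : (β - y) / (2 * β) * (t * (-β)) + (β + y) / (2 * β) * (t * β) = t * y := by
        field_simp
        ring
      rw [harg] at hkey
      refine le_trans hkey ?_
      rw [Real.cosh_eq, Real.sinh_eq]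
      have : t * (-β) = -(t * β) := by ring
      rw [this]
      field_simp
      ring_nf
      apply le_of_eq
      ring
    have hintRHS : Integrable (fun ω => Real.cosh (t * β) + Y ω / β * Real.sinh (t * β)) m :=
      (integrable_const _).add ((hintY.div_const β).mul_const _)
    calc ∫ ω, Real.exp (t * Y ω) ∂m
        ≤ ∫ ω, (Real.cosh (t * β) + Y ω / β * Real.sinh (t * β)) ∂m :=
          integral_mono hintexp hintRHS hpt
      _ = Real.cosh (t * β) := by
          rw [integral_add (integrable_const _) ((hintY.div_const β).mul_const _),
            integral_const, integral_mul_const, integral_div, h0]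
          simp
      _ ≤ Real.exp ((t * β) ^ 2 / 2) := Real.cosh_le_exp_half_sq _
      _ = Real.exp (t ^ 2 * β ^ 2 / 2) := by ring_nf

lemma abs_integral_le (m : Measure Ω) [IsProbabilityMeasure m] {g : Ω → ℝ} {C : ℝ}
    (hC : ∀ ω, |g ω| ≤ C) : |∫ ω, g ω ∂m| ≤ C := by
  have := norm_integral_le_of_norm_le_const (μ := m) (f := g) (C := C)
    (ae_of_all _ fun ω => by simpa using hC ω)
  simpa using this

lemma mgf_pi : ∀ (n : ℕ) (μ : Fin n → Measure Z), (∀ i, IsProbabilityMeasure (μ i)) →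
    ∀ (f : (Fin n → Z) → ℝ) (C β t : ℝ), Measurable f → (∀ S, |f S| ≤ C) →
    (∀ i S z', |f S - f (Function.update S i z')| ≤ β) →
    ∫ S, Real.exp (t * f S) ∂Measure.pi μ
      ≤ Real.exp (t ^ 2 * n * β ^ 2 / 2 + t * ∫ S, f S ∂Measure.pi μ) := by
  intro n
  induction n with
  | zero =>
    intro μ hprob f C β t hmeas hC hbd
    haveI := hprob
    haveI : IsProbabilityMeasure (Measure.pi μ) := by infer_instance
    rw [integral_unique, integral_unique]
    simp [measure_univ]
  | succ n IH =>
    intro μ hprob f C β t hmeas hC hbd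
    haveI := hprob
    set ν := Measure.pi μ with hν
    set μ0 := μ 0 with hμ0
    set ν' := Measure.pi (fun j : Fin n => μ ((0 : Fin (n+1)).succAbove j)) with hν'
    haveI : IsProbabilityMeasure ν := by infer_instance
    haveI : IsProbabilityMeasure μ0 := hprob 0
    haveI : IsProbabilityMeasure ν' := by infer_instance
    set e := MeasurableEquiv.piFinSuccAbove (fun _ : Fin (n+1) => Z) 0 with he
    have hmp : MeasurePreserving e.symm (μ0.prod ν') ν :=
      (measurePreserving_piFinSuccAbove μ 0).symm e
    have hsymm : ∀ q : Z × (Fin n → Z), e.symm q = Fin.insertNth 0 q.1 q.2 := fun q => rfl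
    -- measurability of insertion
    have hins : Measurable (fun q : Z × (Fin n → Z) => Fin.insertNth (α := fun _ => Z) 0 q.1 q.2) := by
      have := e.symm.measurable
      simpa [funext hsymm] using this
    have hinsz : ∀ S' : Fin n → Z, Measurable (fun z => f (Fin.insertNth (α := fun _ => Z) 0 z S')) :=
      fun S' => (hmeas.comp hins).comp (measurable_id.prodMk measurable_const)
    -- G = averaged function
    set G : (Fin n → Z) → ℝ := fun S' => ∫ z, f (Fin.insertNth 0 z S') ∂μ0 with hG
    have hGmeas : Measurable G := by
      have : StronglyMeasurable (fun q : Z × (Fin n → Z) => f (Fin.insertNth 0 q.1 q.2)) :=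
        (hmeas.comp hins).stronglyMeasurable
      exact this.integral_prod_left'.measurable
    have hGC : ∀ S', |G S'| ≤ C := fun S' => abs_integral_le μ0 (fun z => hC _)
    have hGbd : ∀ (j : Fin n) (S' : Fin n → Z) (w : Z), |G S' - G (Function.update S' j w)| ≤ β := by
      intro j S' w
      have hsub : G S' - G (Function.update S' j w)
          = ∫ z, (f (Fin.insertNth 0 z S') - f (Fin.insertNth 0 z (Function.update S' j w))) ∂μ0 := by
        rw [integral_sub (integrable_of_bounded μ0 (hinsz S') (fun z => hC _))
          (integrable_of_bounded μ0 (hinsz _) (fun z => hC _))]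
      rw [hsub]
      apply abs_integral_le μ0
      intro z
      rw [insertNth_update]
      exact hbd _ _ _
    -- inner bound
    have hinner : ∀ S' : Fin n → Z,
        ∫ z, Real.exp (t * f (Fin.insertNth 0 z S')) ∂μ0
          ≤ Real.exp (t ^ 2 * β ^ 2 / 2) * Real.exp (t * G S') := by
      intro S'
      set Y : Z → ℝ := fun z => f (Fin.insertNth 0 z S') - G S' with hY
      have hYmeas : Measurable Y := (hinsz S').sub measurable_const
      have hYb : ∀ z, |Y z| ≤ β := by
        intro z
        have hsub : Y z = ∫ z', (f (Fin.insertNth 0 z S') - f (Fin.insertNth 0 z' S')) ∂μ0 := by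
          rw [integral_sub (integrable_const _) (integrable_of_bounded μ0 (hinsz S') (fun z => hC _)),
            integral_const, probReal_univ]
          simp [hY, hG]
        rw [hsub]
        apply abs_integral_le μ0
        intro z'
        have h1 : Fin.insertNth (α := fun _ => Z) 0 z' S'
            = Function.update (Fin.insertNth 0 z S') 0 z' := by
          rw [Fin.update_insertNth]
        rw [h1]
        exact hbd _ _ _
      have hY0 : ∫ z, Y z ∂μ0 = 0 := by
        rw [hY]
        simp only []
        rw [integral_sub (integrable_of_bounded μ0 (hinsz S') (fun z => hC _)) (integrable_const _),
          integral_const, probReal_univ]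
        simp [hG]
      have hmgf := mgf_centered μ0 hYmeas hYb hY0 t
      have heq : ∀ z, Real.exp (t * f (Fin.insertNth (α := fun _ => Z) 0 z S'))
          = Real.exp (t * Y z) * Real.exp (t * G S') := by
        intro z
        rw [← Real.exp_add]
        congr 1
        simp [hY]; ring
      calc ∫ z, Real.exp (t * f (Fin.insertNth 0 z S')) ∂μ0
          = ∫ z, Real.exp (t * Y z) * Real.exp (t * G S') ∂μ0 := by
            exact integral_congr_ae (ae_of_all _ heq)
        _ = (∫ z, Real.exp (t * Y z) ∂μ0) * Real.exp (t * G S') := integral_mul_const _ _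
        _ ≤ Real.exp (t ^ 2 * β ^ 2 / 2) * Real.exp (t * G S') :=
            mul_le_mul_of_nonneg_right hmgf (Real.exp_pos _).le
    -- Fubini for exp
    have hint_prod : Integrable (fun q : Z × (Fin n → Z) => Real.exp (t * f (Fin.insertNth 0 q.1 q.2)))
        (μ0.prod ν') := by
      apply integrable_of_bounded _ (Real.measurable_exp.comp (measurable_const.mul (hmeas.comp hins)))
        (C := Real.exp (|t| * C))
      intro q
      simp only [Function.comp_apply]
      rw [abs_of_nonneg (Real.exp_pos _).le]
      exact exp_mul_le t C (hC _)
    have hfubini_exp : ∫ S, Real.exp (t * f S) ∂ν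
        = ∫ S', (∫ z, Real.exp (t * f (Fin.insertNth 0 z S')) ∂μ0) ∂ν' := by
      rw [← hmp.integral_comp' (fun S => Real.exp (t * f S))]
      simp only [hsymm]
      exact integral_prod_symm _ hint_prod
    have hint_prod_f : Integrable (fun q : Z × (Fin n → Z) => f (Fin.insertNth 0 q.1 q.2))
        (μ0.prod ν') := integrable_of_bounded _ (hmeas.comp hins) (fun q => hC _)
    have hfubini_f : ∫ S, f S ∂ν = ∫ S', G S' ∂ν' := by
      rw [← hmp.integral_comp' f]
      simp only [hsymm]
      exact integral_prod_symm _ hint_prod_f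
    -- outer estimate
    have hmeas_inner : Measurable (fun S' => ∫ z, Real.exp (t * f (Fin.insertNth 0 z S')) ∂μ0) := by
      have : StronglyMeasurable (fun q : Z × (Fin n → Z) => Real.exp (t * f (Fin.insertNth 0 q.1 q.2))) :=
        (Real.measurable_exp.comp (measurable_const.mul (hmeas.comp hins))).stronglyMeasurable
      exact this.integral_prod_left'.measurable
    have hint_inner : Integrable (fun S' => ∫ z, Real.exp (t * f (Fin.insertNth 0 z S')) ∂μ0) ν' := by
      apply integrable_of_bounded _ hmeas_inner (C := Real.exp (|t| * C))
      intro S'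
      apply abs_integral_le μ0
      intro z
      rw [abs_of_nonneg (Real.exp_pos _).le]
      exact exp_mul_le t C (hC _)
    have hint_expG : Integrable (fun S' => Real.exp (t ^ 2 * β ^ 2 / 2) * Real.exp (t * G S')) ν' := by
      apply integrable_of_bounded _
        (measurable_const.mul (Real.measurable_exp.comp (measurable_const.mul hGmeas)))
        (C := Real.exp (t ^ 2 * β ^ 2 / 2) * Real.exp (|t| * C))
      intro S'
      show |Real.exp (t ^ 2 * β ^ 2 / 2) * Real.exp (t * G S')| ≤ _
      rw [abs_of_nonneg (mul_nonneg (Real.exp_pos _).le (Real.exp_pos _).le)]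
      exact mul_le_mul_of_nonneg_left (exp_mul_le t C (hGC _)) (Real.exp_pos _).le
    calc ∫ S, Real.exp (t * f S) ∂ν
        = ∫ S', (∫ z, Real.exp (t * f (Fin.insertNth 0 z S')) ∂μ0) ∂ν' := hfubini_exp
      _ ≤ ∫ S', Real.exp (t ^ 2 * β ^ 2 / 2) * Real.exp (t * G S') ∂ν' :=
          integral_mono hint_inner hint_expG hinner
      _ = Real.exp (t ^ 2 * β ^ 2 / 2) * ∫ S', Real.exp (t * G S') ∂ν' := integral_const_mul _ _
      _ ≤ Real.exp (t ^ 2 * β ^ 2 / 2)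
            * Real.exp (t ^ 2 * n * β ^ 2 / 2 + t * ∫ S', G S' ∂ν') := by
          apply mul_le_mul_of_nonneg_left _ (Real.exp_pos _).le
          exact IH _ (fun j => hprob _) G C β t hGmeas hGC hGbd
      _ = Real.exp (t ^ 2 * (n+1 : ℕ) * β ^ 2 / 2 + t * ∫ S, f S ∂ν) := by
          rw [← Real.exp_add, hfubini_f]
          push_cast
          ring_nf

lemma telescope {n : ℕ} (f : (Fin n → Z) → ℝ) (β : ℝ)
    (hbd : ∀ i S z', |f S - f (Function.update S i z')| ≤ β) (S S' : Fin n → Z) :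
    |f S - f S'| ≤ n * β := by
  have key : ∀ k : ℕ, k ≤ n →
      |f S - f (fun i => if (i : ℕ) < k then S' i else S i)| ≤ (k : ℝ) * β := by
    intro k
    induction k with
    | zero =>
      intro _
      have h0 : (fun i : Fin n => if (i : ℕ) < 0 then S' i else S i) = S :=
        funext fun i => by simp
      rw [h0]
      simp
    | succ k ih =>
      intro hk
      have hk' : k ≤ n := Nat.le_of_succ_le hk
      have hkn : k < n := hk
      have hupd : (fun i : Fin n => if (i : ℕ) < k + 1 then S' i else S i)
          = Function.update (fun i : Fin n => if (i : ℕ) < k then S' i else S i)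
              ⟨k, hkn⟩ (S' ⟨k, hkn⟩) := by
        funext i
        rcases eq_or_ne i ⟨k, hkn⟩ with rfl | hi
        · simp
        · rw [Function.update_of_ne hi]
          have hik : (i : ℕ) ≠ k := fun h => hi (Fin.ext h)
          by_cases h2 : (i : ℕ) < k
          · simp [h2, Nat.lt_succ_of_lt h2]
          · have h3 : ¬ (i : ℕ) < k + 1 := by omega
            simp [h2, h3]
      calc |f S - f (fun i => if (i : ℕ) < k + 1 then S' i else S i)|
          ≤ |f S - f (fun i => if (i : ℕ) < k then S' i else S i)|
            + |f (fun i => if (i : ℕ) < k then S' i else S i)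
                - f (fun i => if (i : ℕ) < k + 1 then S' i else S i)| := abs_sub_le _ _ _
        _ ≤ (k : ℝ) * β + β := by
            apply add_le_add (ih hk')
            rw [hupd]
            exact hbd _ _ _
        _ = ((k + 1 : ℕ) : ℝ) * β := by push_cast; ring
  have hS' : (fun i : Fin n => if (i : ℕ) < n then S' i else S i) = S' :=
    funext fun i => by simp [i.isLt]
  have := key n le_rfl
  rwa [hS'] at this

lemma rpow_abs_le (p : ℝ) (hp : 0 < p) (lam : ℝ) (hlam : 0 < lam) (x : ℝ) :
    |x| ^ p ≤ (p / (Real.exp 1 * lam)) ^ p * (Real.exp (lam * x) + Real.exp (-(lam * x))) := by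
  have hu : 0 ≤ lam * |x| := by positivity
  have hpe : 0 < p / Real.exp 1 := by positivity
  have h1 : (lam * |x|) ^ p ≤ (p / Real.exp 1) ^ p * Real.exp (lam * |x|) := by
    rcases eq_or_lt_of_le hu with h | h
    · rw [← h, Real.zero_rpow hp.ne']
      positivity
    · set u := lam * |x| with hup
      rw [Real.rpow_def_of_pos h, Real.rpow_def_of_pos hpe, ← Real.exp_add]
      apply Real.exp_le_exp.2
      have hlog : Real.log (u / p) ≤ u / p - 1 := Real.log_le_sub_one_of_pos (by positivity)
      rw [Real.log_div h.ne' hp.ne'] at hlog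
      rw [Real.log_div hp.ne' (Real.exp_ne_zero 1), Real.log_exp]
      have h3 : (Real.log u - Real.log p) * p ≤ (u / p - 1) * p :=
        mul_le_mul_of_nonneg_right hlog hp.le
      have h4 : (u / p - 1) * p = u - p := by field_simp
      nlinarith [h3, h4]
  have h2 : |x| ^ p = (lam * |x|) ^ p / lam ^ p := by
    rw [show |x| = (lam * |x|) / lam from by field_simp, Real.div_rpow hu hlam.le]
    rw [show lam * |x| / lam = |x| from by field_simp]
  have hexp : Real.exp (lam * |x|) ≤ Real.exp (lam * x) + Real.exp (-(lam * x)) := by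
    rcases abs_cases x with ⟨hx, _⟩ | ⟨hx, _⟩
    · rw [hx]
      exact le_add_of_nonneg_right (Real.exp_pos _).le
    · rw [hx, show lam * (-x) = -(lam * x) from by ring]
      exact le_add_of_nonneg_left (Real.exp_pos _).le
  have hsplit : (p / (Real.exp 1 * lam)) ^ p = (p / Real.exp 1) ^ p / lam ^ p := by
    rw [show p / (Real.exp 1 * lam) = (p / Real.exp 1) / lam from by ring,
      Real.div_rpow hpe.le hlam.le]
  calc |x| ^ p = (lam * |x|) ^ p / lam ^ p := h2
    _ ≤ ((p / Real.exp 1) ^ p * Real.exp (lam * |x|)) / lam ^ p := by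
        gcongr
    _ = (p / (Real.exp 1 * lam)) ^ p * Real.exp (lam * |x|) := by
        rw [hsplit]; ring
    _ ≤ (p / (Real.exp 1 * lam)) ^ p * (Real.exp (lam * x) + Real.exp (-(lam * x))) := by
        apply mul_le_mul_of_nonneg_left hexp (by positivity)

end McD

open McD in
/-- p-th moment form of McDiarmid's inequality for real-valued functions with
bounded differences. -/
theorem stmt_2 {Z : Type*} [MeasurableSpace Z]
    (n : ℕ) (μ : Fin n → Measure Z) [∀ i, IsProbabilityMeasure (μ i)]
    (f : (Fin n → Z) → ℝ) (hmeas : Measurable f) (β : ℝ)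
    (hbd : ∀ (i : Fin n) (S : Fin n → Z) (z' : Z),
      |f S - f (Function.update S i z')| ≤ β)
    (p : ℝ) (hp : 1 < p) :
    (∫ S, |f S - ∫ S', f S' ∂Measure.pi μ| ^ p ∂Measure.pi μ) ^ (1 / p)
      ≤ Real.sqrt (2 * p * n) * β := by
  classical
  have hp0 : (0:ℝ) < p := lt_trans one_pos hp
  haveI : IsProbabilityMeasure (Measure.pi μ) := inferInstance
  rcases Nat.eq_zero_or_pos n with hn | hn
  · subst hn
    have h1 : ∫ S', f S' ∂Measure.pi μ = f default := by
      rw [integral_unique]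
      simp [measure_univ]
    have h2 : (fun S : Fin 0 → Z => |f S - f default| ^ p) = fun _ => (0:ℝ) := by
      funext S
      rw [Subsingleton.elim S default, sub_self, abs_zero, Real.zero_rpow hp0.ne']
    rw [h1, h2, integral_zero, Real.zero_rpow (by positivity : (1/p : ℝ) ≠ 0)]
    have h3 : Real.sqrt (2 * p * ((0:ℕ):ℝ)) * β = 0 := by norm_num
    rw [h3]
  · -- n ≥ 1
    haveI hZ : Nonempty Z := nonempty_of_prob (μ ⟨0, hn⟩)
    set i0 : Fin n := ⟨0, hn⟩ with hi0
    obtain ⟨z₀⟩ := hZ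
    set S₀ : Fin n → Z := fun _ => z₀ with hS₀
    have hβ0 : 0 ≤ β := by
      have h := hbd i0 S₀ (S₀ i0)
      rw [Function.update_eq_self] at h
      simpa using h
    set C : ℝ := (n : ℝ) * β + |f S₀| with hCdef
    have hC : ∀ S, |f S| ≤ C := by
      intro S
      calc |f S| = |(f S - f S₀) + f S₀| := by ring_nf
        _ ≤ |f S - f S₀| + |f S₀| := abs_add_le _ _
        _ ≤ (n : ℝ) * β + |f S₀| := add_le_add (telescope f β hbd S S₀) le_rfl
    set ν := Measure.pi μ with hν
    set m := ∫ S', f S' ∂ν with hmdef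
    have hm : |m| ≤ C := abs_integral_le ν hC
    set X : (Fin n → Z) → ℝ := fun S => f S - m with hXdef
    have hXmeas : Measurable X := hmeas.sub measurable_const
    set D : ℝ := C + C with hDdef
    have hXD : ∀ S, |X S| ≤ D := by
      intro S
      have h1 : |f S - m| ≤ |f S| + |m| := by
        rw [sub_eq_add_neg]
        exact le_trans (abs_add_le _ _) (by rw [abs_neg])
      exact le_trans h1 (add_le_add (hC S) hm)
    have hmgf : ∀ t : ℝ, ∫ S, Real.exp (t * X S) ∂ν ≤ Real.exp (t ^ 2 * n * β ^ 2 / 2) := by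
      intro t
      have h1 : ∀ S, Real.exp (t * X S) = Real.exp (t * f S) * Real.exp (-(t * m)) := by
        intro S
        rw [← Real.exp_add]
        congr 1
        simp [hXdef]; ring
      calc ∫ S, Real.exp (t * X S) ∂ν
          = ∫ S, Real.exp (t * f S) * Real.exp (-(t * m)) ∂ν :=
            integral_congr_ae (ae_of_all _ h1)
        _ = (∫ S, Real.exp (t * f S) ∂ν) * Real.exp (-(t * m)) := integral_mul_const _ _
        _ ≤ Real.exp (t ^ 2 * n * β ^ 2 / 2 + t * m) * Real.exp (-(t * m)) := by
            apply mul_le_mul_of_nonneg_right _ (Real.exp_pos _).le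
            exact mgf_pi n μ (fun i => inferInstance) f C β t hmeas hC hbd
        _ = Real.exp (t ^ 2 * n * β ^ 2 / 2) := by
            rw [← Real.exp_add]; ring_nf
    rcases eq_or_lt_of_le hβ0 with hβ | hβ
    · -- β = 0 : f is constant
      have hfc : ∀ S, f S = f S₀ := by
        intro S
        have h := telescope f β hbd S S₀
        rw [← hβ] at h
        have : |f S - f S₀| ≤ 0 := by simpa using h
        have := abs_nonpos_iff.1 this
        linarith [sub_eq_zero.1 this]
      have hm0 : m = f S₀ := by
        rw [hmdef, show f = fun _ => f S₀ from funext hfc]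
        simp [measure_univ]
      have hzero : ∀ S, |f S - m| ^ p = 0 := by
        intro S
        rw [hm0, hfc S, sub_self, abs_zero, Real.zero_rpow hp0.ne']
      rw [show (∫ S, |f S - m| ^ p ∂ν) = 0 by
        rw [integral_congr_ae (ae_of_all _ hzero)]; simp]
      rw [Real.zero_rpow (by positivity : (1/p : ℝ) ≠ 0), ← hβ]
      simp
    · -- β > 0
      have hn' : (0:ℝ) < n := by exact_mod_cast hn
      set lam : ℝ := Real.sqrt p / (Real.sqrt n * β) with hlamdef
      have hlam : 0 < lam := by
        apply div_pos (Real.sqrt_pos.2 hp0) (mul_pos (Real.sqrt_pos.2 hn') hβ)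
      set K : ℝ := Real.sqrt p * (Real.sqrt n * β) with hKdef
      have hK : 0 < K := mul_pos (Real.sqrt_pos.2 hp0) (mul_pos (Real.sqrt_pos.2 hn') hβ)
      have hsqp : Real.sqrt p * Real.sqrt p = p := Real.mul_self_sqrt hp0.le
      have hsqn : Real.sqrt n * Real.sqrt n = (n:ℝ) := Real.mul_self_sqrt hn'.le
      have hKlamp : K * lam = p := by
        rw [hKdef, hlamdef]
        field_simp
        linear_combination hsqp
      have hKlam : p / (Real.exp 1 * lam) = K / Real.exp 1 := by
        rw [← hKlamp, mul_comm (Real.exp 1) lam, mul_comm K lam,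
          mul_div_mul_left _ _ hlam.ne']
      have hpt : ∀ S, |X S| ^ p
          ≤ (K / Real.exp 1) ^ p * (Real.exp (lam * X S) + Real.exp (-(lam * X S))) := by
        intro S
        have := rpow_abs_le p hp0 lam hlam (X S)
        rwa [hKlam] at this
      have hXp_meas : Measurable (fun S => |X S| ^ p) :=
        (Real.continuous_rpow_const hp0.le).measurable.comp hXmeas.abs
      have hXp_int : Integrable (fun S => |X S| ^ p) ν := by
        apply integrable_of_bounded ν hXp_meas (C := D ^ p)
        intro S
        rw [abs_of_nonneg (Real.rpow_nonneg (abs_nonneg _) p)]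
        exact Real.rpow_le_rpow (abs_nonneg _) (hXD S) hp0.le
      have hexp_meas : ∀ t : ℝ, Measurable (fun S => Real.exp (t * X S)) :=
        fun t => Real.measurable_exp.comp (measurable_const.mul hXmeas)
      have hexp_int : ∀ t : ℝ, Integrable (fun S => Real.exp (t * X S)) ν := by
        intro t
        apply integrable_of_bounded ν (hexp_meas t) (C := Real.exp (|t| * D))
        intro S
        rw [abs_of_nonneg (Real.exp_pos _).le]
        exact exp_mul_le t D (hXD S)
      have hnegexp : ∀ S, Real.exp (-(lam * X S)) = Real.exp ((-lam) * X S) := by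
        intro S; congr 1; ring
      have hRHS_int : Integrable
          (fun S => (K / Real.exp 1) ^ p * (Real.exp (lam * X S) + Real.exp (-(lam * X S)))) ν := by
        simp only [hnegexp]
        exact ((hexp_int lam).add (hexp_int (-lam))).const_mul _
      have hlam2 : lam ^ 2 * (n:ℝ) * β ^ 2 / 2 = p / 2 := by
        rw [hlamdef, div_pow, mul_pow, Real.sq_sqrt hp0.le, Real.sq_sqrt hn'.le]
        field_simp
      have hint_le : ∫ S, |X S| ^ p ∂ν ≤ (K / Real.exp 1) ^ p * (2 * Real.exp (p / 2)) := by
        calc ∫ S, |X S| ^ p ∂ν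
            ≤ ∫ S, (K / Real.exp 1) ^ p * (Real.exp (lam * X S) + Real.exp (-(lam * X S))) ∂ν :=
              integral_mono hXp_int hRHS_int hpt
          _ = (K / Real.exp 1) ^ p *
                ((∫ S, Real.exp (lam * X S) ∂ν) + ∫ S, Real.exp ((-lam) * X S) ∂ν) := by
              rw [integral_const_mul]
              congr 1
              simp only [hnegexp]
              exact integral_add (hexp_int lam) (hexp_int (-lam))
          _ ≤ (K / Real.exp 1) ^ p * (Real.exp (p/2) + Real.exp (p/2)) := by
              apply mul_le_mul_of_nonneg_left _ (by positivity)
              apply add_le_add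
              · have h := hmgf lam
                rwa [hlam2] at h
              · have h := hmgf (-lam)
                rw [show (-lam)^2 = lam^2 from by ring, hlam2] at h
                exact h
          _ = (K / Real.exp 1) ^ p * (2 * Real.exp (p / 2)) := by ring
      have hLHS_nonneg : 0 ≤ ∫ S, |X S| ^ p ∂ν :=
        integral_nonneg fun S => Real.rpow_nonneg (abs_nonneg _) _
      have hKe : 0 ≤ K / Real.exp 1 := by positivity
      have hstep1 : (∫ S, |X S| ^ p ∂ν) ^ (1/p)
          ≤ ((K / Real.exp 1) ^ p * (2 * Real.exp (p / 2))) ^ (1/p) :=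
        Real.rpow_le_rpow hLHS_nonneg hint_le (by positivity)
      have hstep2 : ((K / Real.exp 1) ^ p * (2 * Real.exp (p / 2))) ^ (1/p)
          = (K / Real.exp 1) * (2 * Real.exp (p / 2)) ^ (1/p) := by
        rw [Real.mul_rpow (Real.rpow_nonneg hKe p) (by positivity),
          ← Real.rpow_mul hKe, mul_one_div_cancel hp0.ne', Real.rpow_one]
      have hkey : 2 * Real.exp (p / 2) ≤ (Real.sqrt 2 * Real.exp 1) ^ p := by
        have hs2 : Real.sqrt 2 * Real.sqrt 2 = 2 := Real.mul_self_sqrt (by norm_num)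
        have hs2n : 0 ≤ Real.sqrt 2 := Real.sqrt_nonneg 2
        have h43 : (4:ℝ)/3 ≤ Real.sqrt 2 := by nlinarith
        have hexp32 : (3:ℝ)/2 ≤ Real.exp (p/2) := by
          have h1 := Real.add_one_le_exp (p/2)
          linarith
        have h2 : 2 ≤ Real.sqrt 2 * Real.exp (p/2) := by nlinarith
        have h3 : (Real.sqrt 2 * Real.exp 1) ^ p = (Real.sqrt 2) ^ p * Real.exp p := by
          rw [Real.mul_rpow hs2n (Real.exp_pos 1).le, Real.exp_one_rpow]
        have h4 : Real.sqrt 2 ≤ (Real.sqrt 2) ^ p := by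
          calc Real.sqrt 2 = (Real.sqrt 2) ^ (1:ℝ) := (Real.rpow_one _).symm
            _ ≤ (Real.sqrt 2) ^ p :=
              Real.rpow_le_rpow_of_exponent_le (Real.one_le_sqrt.2 (by norm_num)) hp.le
        have h5 : Real.exp p = Real.exp (p/2) * Real.exp (p/2) := by
          rw [← Real.exp_add]; ring_nf
        rw [h3, h5]
        have hep := Real.exp_pos (p/2)
        calc 2 * Real.exp (p/2)
            ≤ (Real.sqrt 2 * Real.exp (p/2)) * Real.exp (p/2) :=
              mul_le_mul_of_nonneg_right h2 hep.le
          _ = Real.sqrt 2 * (Real.exp (p/2) * Real.exp (p/2)) := by ring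
          _ ≤ (Real.sqrt 2) ^ p * (Real.exp (p/2) * Real.exp (p/2)) :=
              mul_le_mul_of_nonneg_right h4 (by positivity)
      have hstep3 : (2 * Real.exp (p / 2)) ^ (1/p) ≤ Real.sqrt 2 * Real.exp 1 := by
        have h1 : (2 * Real.exp (p/2)) ^ (1/p) ≤ ((Real.sqrt 2 * Real.exp 1) ^ p) ^ (1/p) :=
          Real.rpow_le_rpow (by positivity) hkey (by positivity)
        rwa [← Real.rpow_mul (by positivity), mul_one_div_cancel hp0.ne', Real.rpow_one] at h1
      have hfinal : (K / Real.exp 1) * (Real.sqrt 2 * Real.exp 1) = Real.sqrt 2 * K := by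
        field_simp
      have hRHSeq : Real.sqrt (2 * p * n) * β = Real.sqrt 2 * K := by
        rw [hKdef, show (2:ℝ) * p * n = 2 * (p * n) from by ring,
          Real.sqrt_mul (by norm_num) (p * n), Real.sqrt_mul hp0.le n]
        ring
      calc (∫ S, |X S| ^ p ∂ν) ^ (1/p)
          ≤ (K / Real.exp 1) * (2 * Real.exp (p / 2)) ^ (1/p) := by
            rw [← hstep2]; exact hstep1
        _ ≤ (K / Real.exp 1) * (Real.sqrt 2 * Real.exp 1) :=
            mul_le_mul_of_nonneg_left hstep3 hKe
        _ = Real.sqrt 2 * K := hfinal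
        _ = Real.sqrt (2 * p * n) * β := hRHSeq.symm
end

section
/- Suppose the algorithm A is β-uniformly-stable in gradients. Define p(z_1, …, z_n) := E_{Z∼ρ}[‖∇f(A(z_1, …, z_n); Z)‖₂²] and, for each i ∈ [n], p_i(z_1, …, z_n) := sup_{z_i' ∈ Z} p(z_1, …, z_{i−1}, z_i', z_{i+1}, …, z_n). Then for every (z_1, …, z_n) ∈ Z^n: Σ_{i=1}^n (p_i(z_1, …, z_n) − p(z_1, …, z_n))² ≤ 8nβ² · p(z_1, …, z_n) + 2nβ⁴; that is, p is (8nβ², 2nβ⁴)-weakly self-bounded. -/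
open MeasureTheory Filter

private lemma meas_fderiv_dir {Z : Type*} [MeasurableSpace Z] {d : ℕ}
    (f : EuclideanSpace ℝ (Fin d) → Z → ℝ)
    (hfm : ∀ w, Measurable (f w))
    (hdiff : ∀ z, Differentiable ℝ (fun w => f w z))
    (w₀ v : EuclideanSpace ℝ (Fin d)) :
    Measurable fun z => fderiv ℝ (fun w => f w z) w₀ v := by
  apply measurable_of_tendsto_metrizable'
    (f := fun k : ℕ => fun z => ((k : ℝ) + 1) * (f (w₀ + ((k : ℝ) + 1)⁻¹ • v) z - f w₀ z))
    atTop
  · intro k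
    exact ((hfm _).sub (hfm _)).const_mul _
  · rw [tendsto_pi_nhds]
    intro z
    have h1 : HasDerivAt (fun t : ℝ => w₀ + t • v) v 0 := by
      simpa using ((hasDerivAt_id (0 : ℝ)).smul_const v).const_add w₀
    have h2 : HasFDerivAt (fun w => f w z) (fderiv ℝ (fun w => f w z) w₀)
        ((fun t : ℝ => w₀ + t • v) 0) := by
      simpa using ((hdiff z) w₀).hasFDerivAt
    have hd := h2.comp_hasDerivAt 0 h1
    rw [hasDerivAt_iff_tendsto_slope] at hd
    have hu : Tendsto (fun k : ℕ => ((k : ℝ) + 1)⁻¹) atTop (nhdsWithin 0 {0}ᶜ) := by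
      apply tendsto_nhdsWithin_of_tendsto_nhds_of_eventually_within
      · simpa [one_div] using tendsto_one_div_add_atTop_nhds_zero_nat (𝕜 := ℝ)
      · filter_upwards with k
        simp only [Set.mem_compl_iff, Set.mem_singleton_iff]
        positivity
    have := hd.comp hu
    convert this using 2 with k
    have hk : ((k : ℝ) + 1) ≠ 0 := by positivity
    simp [slope, Function.comp, smul_eq_mul, sub_zero, inv_inv]

private lemma meas_grad {Z : Type*} [MeasurableSpace Z] {d : ℕ}
    (f : EuclideanSpace ℝ (Fin d) → Z → ℝ)
    (hfm : ∀ w, Measurable (f w))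
    (hdiff : ∀ z, Differentiable ℝ (fun w => f w z))
    (w₀ : EuclideanSpace ℝ (Fin d)) :
    Measurable fun z => gradient (fun w => f w z) w₀ := by
  have hcomp : Measurable fun z =>
      (MeasurableEquiv.toLp 2 (Fin d → ℝ)).symm (gradient (fun w => f w z) w₀) := by
    rw [measurable_pi_iff]
    intro i
    have hcoord : ∀ z, (MeasurableEquiv.toLp 2 (Fin d → ℝ)).symm
        (gradient (fun w => f w z) w₀) i
        = fderiv ℝ (fun w => f w z) w₀ (EuclideanSpace.single i 1) := by
      intro z
      have h1 := InnerProductSpace.toDual_symm_apply (𝕜 := ℝ)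
        (E := EuclideanSpace ℝ (Fin d)) (y := fderiv ℝ (fun w => f w z) w₀)
        (x := EuclideanSpace.single i 1)
      rw [EuclideanSpace.inner_single_right] at h1
      simpa [gradient] using h1
    simpa [Function.comp, hcoord] using
      meas_fderiv_dir f hfm hdiff w₀ (EuclideanSpace.single i 1)
  have h2 := (MeasurableEquiv.toLp 2 (Fin d → ℝ)).symm.symm.measurable.comp hcomp
  exact h2

/-- The function `p(S) = E_Z[‖∇f(A(S); Z)‖²]` is `(8nβ², 2nβ⁴)`-weakly
self-bounded when `A` is `β`-uniformly-stable in gradients. -/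
theorem stmt_17 {Z : Type*} [MeasurableSpace Z] [Nonempty Z]
    (ρ : Measure Z) [IsProbabilityMeasure ρ]
    (d n : ℕ)
    (f : EuclideanSpace ℝ (Fin d) → Z → ℝ)
    (A : (Fin n → Z) → EuclideanSpace ℝ (Fin d))
    (hfm : ∀ w, Measurable (f w))
    (hdiff : ∀ z, Differentiable ℝ (fun w => f w z))
    (β : ℝ)
    -- A is β-uniformly-stable in gradients
    (hstab : ∀ (S : Fin n → Z) (i : Fin n) (z' z : Z),
      ‖gradient (fun w => f w z) (A S)
        - gradient (fun w => f w z) (A (Function.update S i z'))‖ ≤ β)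
    -- the suprema defining p_i are finite
    (hbdd : ∀ (i : Fin n) (S : Fin n → Z),
      BddAbove (Set.range fun z' : Z =>
        ∫ z, ‖gradient (fun w => f w z) (A (Function.update S i z'))‖ ^ 2 ∂ρ))
    (S : Fin n → Z) :
    ∑ i : Fin n,
        ((⨆ z' : Z, ∫ z, ‖gradient (fun w => f w z)
              (A (Function.update S i z'))‖ ^ 2 ∂ρ)
          - ∫ z, ‖gradient (fun w => f w z) (A S)‖ ^ 2 ∂ρ) ^ 2
      ≤ 8 * n * β ^ 2 * (∫ z, ‖gradient (fun w => f w z) (A S)‖ ^ 2 ∂ρ)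
        + 2 * n * β ^ 4 := by
  set G : (Fin n → Z) → Z → EuclideanSpace ℝ (Fin d) :=
    fun S' z => gradient (fun w => f w z) (A S') with hG
  have hGmeas : ∀ S', Measurable fun z => ‖G S' z‖ ^ 2 := by
    intro S'
    exact ((meas_grad f hfm hdiff (A S')).norm).pow_const 2
  set p : ℝ := ∫ z, ‖G S z‖ ^ 2 ∂ρ with hp
  -- per-index bound
  have key : ∀ i : Fin n,
      ((⨆ z' : Z, ∫ z, ‖G (Function.update S i z') z‖ ^ 2 ∂ρ) - p) ^ 2
        ≤ 8 * β ^ 2 * p + 2 * β ^ 4 := by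
    intro i
    obtain ⟨z₀⟩ := ‹Nonempty Z›
    have hβ0 : 0 ≤ β := by
      have := hstab S i (S i) z₀
      rw [Function.update_eq_self] at this
      simpa using this
    set q : Z → ℝ := fun z' => ∫ z, ‖G (Function.update S i z') z‖ ^ 2 ∂ρ with hq
    have hq_p : q (S i) = p := by
      simp [hq, Function.update_eq_self, hp]
    have hsup_ge : p ≤ ⨆ z', q z' := hq_p ▸ le_ciSup (hbdd i S) (S i)
    -- pointwise norm comparisons
    have hcmp : ∀ z' z, ‖G (Function.update S i z') z‖ ≤ ‖G S z‖ + β := by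
      intro z' z
      have := hstab S i z' z
      have h2 : ‖G (Function.update S i z') z‖ - ‖G S z‖ ≤ β := by
        calc ‖G (Function.update S i z') z‖ - ‖G S z‖
            ≤ ‖G S z - G (Function.update S i z') z‖ := by
              have := norm_sub_norm_le (G (Function.update S i z') z) (G S z)
              simpa [norm_sub_rev] using this
          _ ≤ β := this
      linarith
    have hcmp' : ∀ z' z, ‖G S z‖ ≤ ‖G (Function.update S i z') z‖ + β := by
      intro z' z
      have := hstab S i z' z
      have h2 : ‖G S z‖ - ‖G (Function.update S i z') z‖ ≤ β :=
        le_trans (norm_sub_norm_le _ _) this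
      linarith
    by_cases hint : Integrable (fun z => ‖G S z‖ ^ 2) ρ
    · -- integrable case
      have hnorm_int : Integrable (fun z => ‖G S z‖) ρ := by
        refine Integrable.mono' (hint.add (integrable_const 1))
          ((meas_grad f hfm hdiff (A S)).norm).aestronglyMeasurable ?_
        filter_upwards with z
        have h0 : (0:ℝ) ≤ ‖G S z‖ := norm_nonneg _
        simp only [Pi.add_apply]
        rw [Real.norm_eq_abs, abs_of_nonneg h0]
        nlinarith [sq_nonneg (‖G S z‖ - 1)]
      set t : ℝ := ∫ z, ‖G S z‖ ∂ρ with ht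
      have ht0 : 0 ≤ t := integral_nonneg fun z => norm_nonneg _
      have hp0 : 0 ≤ p := integral_nonneg fun z => sq_nonneg _
      have hts : t ^ 2 ≤ p := by
        have hmem : MemLp (fun z => ‖G S z‖) 2 ρ :=
          (memLp_two_iff_integrable_sq
            ((meas_grad f hfm hdiff (A S)).norm).aestronglyMeasurable).mpr hint
        have hv := ProbabilityTheory.variance_nonneg (fun z => ‖G S z‖) ρ
        rw [ProbabilityTheory.variance_eq_sub hmem] at hv
        have heq : ∫ z, ((fun z => ‖G S z‖) ^ 2) z ∂ρ = p := by
          simp only [Pi.pow_apply, hp]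
        rw [heq] at hv
        linarith
      -- integral of the dominating function
      have hdom_int : Integrable (fun z => (‖G S z‖ + β) ^ 2) ρ := by
        have : (fun z => (‖G S z‖ + β) ^ 2)
            = fun z => ‖G S z‖ ^ 2 + (2 * β * ‖G S z‖ + β ^ 2) := by
          funext z; ring
        rw [this]
        exact hint.add ((hnorm_int.const_mul _).add (integrable_const _))
      have hdom_val : ∫ z, (‖G S z‖ + β) ^ 2 ∂ρ = p + (2 * β * t + β ^ 2) := by
        have h1 : (fun z => (‖G S z‖ + β) ^ 2)
            = fun z => ‖G S z‖ ^ 2 + (2 * β * ‖G S z‖ + β ^ 2) := by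
          funext z; ring
        have hIa : Integrable (fun z => 2 * β * ‖G S z‖ + β ^ 2) ρ := by
          exact (hnorm_int.const_mul _).add (integrable_const _)
        have hIb : Integrable (fun z => 2 * β * ‖G S z‖) ρ := hnorm_int.const_mul _
        rw [h1, integral_add hint hIa, integral_add hIb (integrable_const _),
          MeasureTheory.integral_const_mul]
        simp [hp, ht]
      have hq_le : ∀ z', q z' ≤ p + (2 * β * t + β ^ 2) := by
        intro z'
        by_cases hI : Integrable (fun z => ‖G (Function.update S i z') z‖ ^ 2) ρ
        · have : q z' ≤ ∫ z, (‖G S z‖ + β) ^ 2 ∂ρ := by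
            apply integral_mono hI hdom_int
            intro z
            have h0 : (0:ℝ) ≤ ‖G (Function.update S i z') z‖ := norm_nonneg _
            have := hcmp z' z
            show ‖G (Function.update S i z') z‖ ^ 2 ≤ (‖G S z‖ + β) ^ 2
            nlinarith
          rw [hdom_val] at this
          exact this
        · rw [hq]
          simp only
          rw [integral_undef hI]
          nlinarith
      have hsup_le : (⨆ z', q z') ≤ p + (2 * β * t + β ^ 2) := ciSup_le hq_le
      have hD0 : 0 ≤ (⨆ z', q z') - p := by linarith
      have hDle : (⨆ z', q z') - p ≤ 2 * β * t + β ^ 2 := by linarith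
      have hsq : ((⨆ z', q z') - p) ^ 2 ≤ (2 * β * t + β ^ 2) ^ 2 :=
        pow_le_pow_left₀ hD0 hDle 2
      nlinarith [sq_nonneg (2 * β * t - β ^ 2), sq_nonneg β, mul_nonneg (mul_nonneg hβ0 hβ0) (sub_nonneg.mpr hts)]
    · -- non-integrable case : everything is zero
      have hq0 : ∀ z', q z' = 0 := by
        intro z'
        apply integral_undef
        intro hI
        apply hint
        refine Integrable.mono' ((hI.const_mul 2).add (integrable_const (2 * β ^ 2)))
          (hGmeas S).aestronglyMeasurable ?_
        filter_upwards with z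
        have h0 : (0:ℝ) ≤ ‖G S z‖ := norm_nonneg _
        have h1 : (0:ℝ) ≤ ‖G (Function.update S i z') z‖ := norm_nonneg _
        have := hcmp' z' z
        simp only [Pi.add_apply]
        rw [Real.norm_eq_abs, abs_of_nonneg (sq_nonneg _)]
        nlinarith [sq_nonneg (‖G (Function.update S i z') z‖ - β)]
      have hp0 : p = 0 := by
        have := hq0 (S i); rw [hq_p] at this; exact this
      have hsup0 : (⨆ z', q z') = 0 := by
        have : (fun z' => q z') = fun _ : Z => (0:ℝ) := funext hq0
        rw [iSup, this]
        simp
      rw [hsup0, hp0]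
      norm_num
      positivity
  calc ∑ i : Fin n,
        ((⨆ z' : Z, ∫ z, ‖G (Function.update S i z') z‖ ^ 2 ∂ρ) - p) ^ 2
      ≤ ∑ _i : Fin n, (8 * β ^ 2 * p + 2 * β ^ 4) := Finset.sum_le_sum fun i _ => key i
    _ = n * (8 * β ^ 2 * p + 2 * β ^ 4) := by
        rw [Finset.sum_const, Finset.card_univ, Fintype.card_fin, nsmul_eq_mul]
    _ = 8 * n * β ^ 2 * p + 2 * n * β ^ 4 := by ring
end
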